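/- (Duhamel's formula, equation (3.9).) Let A be a unital Banach algebra (over ℝ or ℂ). Then for all X, Y ∈ A, exp(X) − exp(Y) = ∫_0^1 exp(αX) · (X − Y) · exp((1−α)Y) dα, where the integral is a Bochner integral in A. -/

import Mathlib

open NormedSpace

/-- Duhamel's formula, equation (3.9). In a unital Banach algebra `A`
(over `ℝ` or `ℂ`; a complex Banach algebra is in particular a real one, with the same
exponential), for all `X, Y ∈ A`,
`exp(X) − exp(Y) = ∫₀¹ exp(αX) (X − Y) exp((1−α)Y) dα`,
the integral being a Bochner integral in `A`. -/
theorem duhamel_formula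
    {A : Type*} [NormedRing A] [NormedAlgebra ℝ A] [CompleteSpace A]
    (X Y : A) :
    NormedSpace.exp X - NormedSpace.exp Y =
      ∫ α in (0 : ℝ)..1,
        NormedSpace.exp (α • X) * (X - Y) * NormedSpace.exp ((1 - α) • Y) := by
  have key : ∀ α : ℝ, HasDerivAt (fun t : ℝ => exp (t • X) * exp ((1 - t) • Y))
      (exp (α • X) * (X - Y) * exp ((1 - α) • Y)) α := by
    intro α
    have h1 : HasDerivAt (fun t : ℝ => exp (t • X)) (exp (α • X) * X) α :=
      hasDerivAt_exp_smul_const X α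
    have h2 : HasDerivAt (fun t : ℝ => exp ((1 - t) • Y))
        (-(Y * exp ((1 - α) • Y))) α := by
      have hg : HasDerivAt (fun t : ℝ => 1 - t) (-1) α := by
        simpa using (hasDerivAt_id α).const_sub 1
      have := (hasDerivAt_exp_smul_const' Y (1 - α)).scomp α hg
      simpa [mul_comm, Function.comp_def] using this
    have : HasDerivAt (fun t : ℝ => exp (t • X) * exp ((1 - t) • Y)) _ α := h1.mul h2
    convert this using 1
    simp only [mul_neg, sub_eq_add_neg, add_mul, neg_mul, mul_add, mul_assoc]
  have hcont : Continuous fun α : ℝ =>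
      exp (α • X) * (X - Y) * exp ((1 - α) • Y) := by
    let +nondep : NormedAlgebra ℚ A := .restrictScalars ℚ ℝ A
    exact ((exp_continuous.comp (continuous_id.smul continuous_const)).mul
        continuous_const).mul
      (exp_continuous.comp ((continuous_const.sub continuous_id).smul continuous_const))
  rw [intervalIntegral.integral_eq_sub_of_hasDerivAt (fun α _ => key α)
      (hcont.intervalIntegrable 0 1)]
  simp
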